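/- With G : H₁ → H₂ bounded, L = [[0,G],[−G*,0]] on H = H₁ ⊕ H₂, and K := L(1+L)⁻¹, the blocks of K are K₁₁ = G*G(1+G*G)⁻¹, K₂₂ = GG*(1+GG*)⁻¹, K₂₁ = G(1+G*G)⁻¹, K₁₂ = −G*(1+GG*)⁻¹; in particular K is J-self-adjoint. -/

import Mathlib

open scoped InnerProductSpace ComplexConjugate

noncomputable section

/-- The absolute value `|A| = √(A*A)` of a bounded operator on a complex Hilbert space. -/
noncomputable def absCLM {H : Type} [NormedAddCommGroup H] [InnerProductSpace ℂ H]
    [CompleteSpace H] (A : H →L[ℂ] H) : H →L[ℂ] H :=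
  CFC.sqrt (ContinuousLinearMap.adjoint A * A)

/-- The trace of an operator computed along a Hilbert basis. -/
noncomputable def traceAlong {H : Type} [NormedAddCommGroup H] [InnerProductSpace ℂ H]
    [CompleteSpace H] {ι : Type} (b : HilbertBasis ι ℂ H) (A : H →L[ℂ] H) : ℂ :=
  ∑' i, ⟪b i, A (b i)⟫_ℂ

/-- `A` is trace class: `Tr |A| < ∞` along the Hilbert basis `b`. -/
def IsTraceClassAlong {H : Type} [NormedAddCommGroup H] [InnerProductSpace ℂ H]
    [CompleteSpace H] {ι : Type} (b : HilbertBasis ι ℂ H) (A : H →L[ℂ] H) : Prop :=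
  Summable fun i => (⟪b i, absCLM A (b i)⟫_ℂ).re

/-- The trace norm `‖A‖₁ = Tr |A|` along the Hilbert basis `b`. -/
noncomputable def traceNormAlong {H : Type} [NormedAddCommGroup H] [InnerProductSpace ℂ H]
    [CompleteSpace H] {ι : Type} (b : HilbertBasis ι ℂ H) (A : H →L[ℂ] H) : ℝ :=
  ∑' i, (⟪b i, absCLM A (b i)⟫_ℂ).re

/-- `A` is a Hilbert–Schmidt operator (along the Hilbert basis `b`). -/
def IsHSAlong {H : Type} [NormedAddCommGroup H] [InnerProductSpace ℂ H]
    [CompleteSpace H] {ι : Type} (b : HilbertBasis ι ℂ H) (A : H →L[ℂ] H) : Prop :=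
  Summable fun i => ‖A (b i)‖ ^ 2

/-- The Hilbert–Schmidt norm `‖A‖₂` along the Hilbert basis `b`. -/
noncomputable def hsNormAlong {H : Type} [NormedAddCommGroup H] [InnerProductSpace ℂ H]
    [CompleteSpace H] {ι : Type} (b : HilbertBasis ι ℂ H) (A : H →L[ℂ] H) : ℝ :=
  Real.sqrt (∑' i, ‖A (b i)‖ ^ 2)

/-- `Cₙ(A) = (1/n!) Σ_{ξ∈Sₙ} sign ξ · Π_{η ∈ Cycle(ξ)} tr(A^{|η|})`, where `trA` is used
for the trace of `A` itself (cycles of length one) and traces of higher powers are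
computed along the Hilbert basis `b`. -/
noncomputable def cycleSum {H : Type} [NormedAddCommGroup H] [InnerProductSpace ℂ H]
    [CompleteSpace H] {ι : Type} (b : HilbertBasis ι ℂ H) (trA : ℂ) (A : H →L[ℂ] H)
    (n : ℕ) : ℂ :=
  ((Nat.factorial n : ℂ))⁻¹ * ∑ ξ : Equiv.Perm (Fin n),
    ((Equiv.Perm.sign ξ : ℤ) : ℂ) * trA ^ (n - ξ.support.card) *
      ∏ η ∈ ξ.cycleFactorsFinset, traceAlong b (A ^ η.support.card)

/-- The extended Fredholm determinant `Det(1+A)` for `A ∈ L_{1|2}(H)`, with respect to the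
splitting given by the projections `P₁, P₂`: `Det(1+A) = 1 + Σ_{n≥1} Cₙ(A)`, where in `Cₙ(A)`
the trace of `A` is taken to be `Tr(A_even)`. -/
noncomputable def fredholmDetExt {H : Type} [NormedAddCommGroup H] [InnerProductSpace ℂ H]
    [CompleteSpace H] {ι : Type} (b : HilbertBasis ι ℂ H) (P₁ P₂ : H →L[ℂ] H)
    (A : H →L[ℂ] H) : ℂ :=
  1 + ∑' n : ℕ, cycleSum b (traceAlong b (P₁ * A * P₁ + P₂ * A * P₂)) A (n + 1)

/-- The classical Fredholm determinant `Det(1+A)` of a trace class operator `A`. -/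
noncomputable def fredholmDetCl {H : Type} [NormedAddCommGroup H] [InnerProductSpace ℂ H]
    [CompleteSpace H] {ι : Type} (b : HilbertBasis ι ℂ H) (A : H →L[ℂ] H) : ℂ :=
  1 + ∑' n : ℕ, cycleSum b (traceAlong b A) A (n + 1)

end
section myaux
variable {H₁ H₂ : Type} [NormedAddCommGroup H₁] [InnerProductSpace ℂ H₁] [CompleteSpace H₁]
  [NormedAddCommGroup H₂] [InnerProductSpace ℂ H₂] [CompleteSpace H₂]

open ContinuousLinearMap

lemma my_isUnit_one_add (G : H₁ →L[ℂ] H₂) :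
    IsUnit ((1 : H₁ →L[ℂ] H₁) + (adjoint G).comp G) := by
  apply isUnit_of_forall_le_norm_inner_map _ (c := 1) one_pos
  intro x
  have h : ⟪((1 : H₁ →L[ℂ] H₁) + (adjoint G).comp G) x, x⟫_ℂ
      = ((‖x‖ ^ 2 + ‖G x‖ ^ 2 : ℝ) : ℂ) := by
    simp [inner_add_left, adjoint_inner_left, inner_self_eq_norm_sq_to_K]
  rw [h]
  rw [Complex.norm_real, Real.norm_eq_abs, abs_of_nonneg (by positivity)]
  have : (0:ℝ) ≤ ‖G x‖ ^ 2 := by positivity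
  push_cast
  nlinarith

end myaux

set_option maxHeartbeats 2000000

/-- With `G : H₁ → H₂` bounded, `L` the operator on `H = H₁ ⊕ H₂`
(realized as `WithLp 2 (H₁ × H₂)`) with blocks `L₂₁ = G`, `L₁₂ = −G*`, zero diagonal
blocks, and `K := L(1+L)⁻¹`, the blocks of `K` are `K₁₁ = G*G(1+G*G)⁻¹`,
`K₂₂ = GG*(1+GG*)⁻¹`, `K₂₁ = G(1+G*G)⁻¹`, `K₁₂ = −G*(1+GG*)⁻¹`; in particular `K` is
`J`-self-adjoint. -/
theorem stmt_16 {H₁ H₂ : Type}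
    [NormedAddCommGroup H₁] [InnerProductSpace ℂ H₁] [CompleteSpace H₁]
    [NormedAddCommGroup H₂] [InnerProductSpace ℂ H₂] [CompleteSpace H₂]
    (G : H₁ →L[ℂ] H₂)
    (L : WithLp 2 (H₁ × H₂) →L[ℂ] WithLp 2 (H₁ × H₂))
    (hL : ∀ f : WithLp 2 (H₁ × H₂),
      WithLp.equiv 2 (H₁ × H₂) (L f) =
        (-(ContinuousLinearMap.adjoint G) (WithLp.equiv 2 (H₁ × H₂) f).2,
          G (WithLp.equiv 2 (H₁ × H₂) f).1))
    (P₁ P₂ : WithLp 2 (H₁ × H₂) →L[ℂ] WithLp 2 (H₁ × H₂))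
    (hP₁ : ∀ f : WithLp 2 (H₁ × H₂),
      WithLp.equiv 2 (H₁ × H₂) (P₁ f) = ((WithLp.equiv 2 (H₁ × H₂) f).1, 0))
    (hP₂ : ∀ f : WithLp 2 (H₁ × H₂),
      WithLp.equiv 2 (H₁ × H₂) (P₂ f) = (0, (WithLp.equiv 2 (H₁ × H₂) f).2))
    (K : WithLp 2 (H₁ × H₂) →L[ℂ] WithLp 2 (H₁ × H₂))
    (hK : K = L * Ring.inverse (1 + L)) :
    (∀ f : WithLp 2 (H₁ × H₂),
      WithLp.equiv 2 (H₁ × H₂) (K f) =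
        (((ContinuousLinearMap.adjoint G).comp G *
              Ring.inverse (1 + (ContinuousLinearMap.adjoint G).comp G))
            (WithLp.equiv 2 (H₁ × H₂) f).1 -
          ((ContinuousLinearMap.adjoint G).comp
              (Ring.inverse (1 + G.comp (ContinuousLinearMap.adjoint G))))
            (WithLp.equiv 2 (H₁ × H₂) f).2,
         (G.comp (Ring.inverse (1 + (ContinuousLinearMap.adjoint G).comp G)))
            (WithLp.equiv 2 (H₁ × H₂) f).1 +
          (G.comp (ContinuousLinearMap.adjoint G) *
              Ring.inverse (1 + G.comp (ContinuousLinearMap.adjoint G)))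
            (WithLp.equiv 2 (H₁ × H₂) f).2)) ∧
      ContinuousLinearMap.adjoint K * (P₁ - P₂) = (P₁ - P₂) * K := by
  classical
  set A := ContinuousLinearMap.adjoint G with hA
  have hU₁ : IsUnit ((1 : H₁ →L[ℂ] H₁) + A.comp G) := my_isUnit_one_add G
  have hU₂ : IsUnit ((1 : H₂ →L[ℂ] H₂) + G.comp A) := by
    have h := my_isUnit_one_add A
    rwa [hA, ContinuousLinearMap.adjoint_adjoint] at h
  set S₁ := Ring.inverse ((1 : H₁ →L[ℂ] H₁) + A.comp G) with hS₁
  set S₂ := Ring.inverse ((1 : H₂ →L[ℂ] H₂) + G.comp A) with hS₂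
  -- pointwise cancellation facts
  have hDS₁ : ∀ x : H₁, S₁ x + A (G (S₁ x)) = x := by
    intro x
    have h := Ring.mul_inverse_cancel _ hU₁
    have h2 := ContinuousLinearMap.ext_iff.mp h x
    simpa [ContinuousLinearMap.mul_apply] using h2
  have hSD₁ : ∀ x : H₁, S₁ (x + A (G x)) = x := by
    intro x
    have h := Ring.inverse_mul_cancel _ hU₁
    have h2 := ContinuousLinearMap.ext_iff.mp h x
    simpa [ContinuousLinearMap.mul_apply] using h2
  have hDS₂ : ∀ x : H₂, S₂ x + G (A (S₂ x)) = x := by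
    intro x
    have h := Ring.mul_inverse_cancel _ hU₂
    have h2 := ContinuousLinearMap.ext_iff.mp h x
    simpa [ContinuousLinearMap.mul_apply] using h2
  have hSD₂ : ∀ x : H₂, S₂ (x + G (A x)) = x := by
    intro x
    have h := Ring.inverse_mul_cancel _ hU₂
    have h2 := ContinuousLinearMap.ext_iff.mp h x
    simpa [ContinuousLinearMap.mul_apply] using h2
  -- intertwining
  have hGS : ∀ x : H₁, G (S₁ x) = S₂ (G x) := by
    intro x
    have h1 : G (S₁ x) + G (A (G (S₁ x))) = G x := by
      rw [← map_add, hDS₁ x]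
    calc G (S₁ x) = S₂ (G (S₁ x) + G (A (G (S₁ x)))) := (hSD₂ _).symm
      _ = S₂ (G x) := by rw [h1]
  have hAS : ∀ x : H₂, A (S₂ x) = S₁ (A x) := by
    intro x
    have h1 : A (S₂ x) + A (G (A (S₂ x))) = A x := by
      rw [← map_add, hDS₂ x]
    calc A (S₂ x) = S₁ (A (S₂ x) + A (G (A (S₂ x)))) := (hSD₁ _).symm
      _ = S₁ (A x) := by rw [h1]
  -- self-adjointness of S₁, S₂
  have hD₁sa : ContinuousLinearMap.adjoint ((1 : H₁ →L[ℂ] H₁) + A.comp G)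
      = (1 : H₁ →L[ℂ] H₁) + A.comp G := by
    rw [map_add, ContinuousLinearMap.adjoint_comp, hA, ContinuousLinearMap.adjoint_adjoint,
      ContinuousLinearMap.one_def, ContinuousLinearMap.adjoint_id]
  have hD₂sa : ContinuousLinearMap.adjoint ((1 : H₂ →L[ℂ] H₂) + G.comp A)
      = (1 : H₂ →L[ℂ] H₂) + G.comp A := by
    rw [map_add, ContinuousLinearMap.adjoint_comp, hA, ContinuousLinearMap.adjoint_adjoint,
      ContinuousLinearMap.one_def, ContinuousLinearMap.adjoint_id]
  have hS₁sa : ContinuousLinearMap.adjoint S₁ = S₁ := by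
    have h1 := Ring.mul_inverse_cancel _ hU₁
    have h2 := Ring.inverse_mul_cancel _ hU₁
    have h3 : ((1 : H₁ →L[ℂ] H₁) + A.comp G) * star S₁ = 1 := by
      have h4 := congrArg star h2
      rwa [star_mul, star_one, ContinuousLinearMap.star_eq_adjoint, hD₁sa] at h4
    rw [ContinuousLinearMap.star_eq_adjoint] at h3
    calc ContinuousLinearMap.adjoint S₁
        = (S₁ * ((1 : H₁ →L[ℂ] H₁) + A.comp G)) * ContinuousLinearMap.adjoint S₁ := by
          rw [h2, one_mul]
      _ = S₁ * (((1 : H₁ →L[ℂ] H₁) + A.comp G) * ContinuousLinearMap.adjoint S₁) := by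
          rw [mul_assoc]
      _ = S₁ := by rw [h3, mul_one]
  have hS₂sa : ContinuousLinearMap.adjoint S₂ = S₂ := by
    have h1 := Ring.mul_inverse_cancel _ hU₂
    have h2 := Ring.inverse_mul_cancel _ hU₂
    have h3 : ((1 : H₂ →L[ℂ] H₂) + G.comp A) * star S₂ = 1 := by
      have h4 := congrArg star h2
      rwa [star_mul, star_one, ContinuousLinearMap.star_eq_adjoint, hD₂sa] at h4
    rw [ContinuousLinearMap.star_eq_adjoint] at h3
    calc ContinuousLinearMap.adjoint S₂
        = (S₂ * ((1 : H₂ →L[ℂ] H₂) + G.comp A)) * ContinuousLinearMap.adjoint S₂ := by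
          rw [h2, one_mul]
      _ = S₂ * (((1 : H₂ →L[ℂ] H₂) + G.comp A) * ContinuousLinearMap.adjoint S₂) := by
          rw [mul_assoc]
      _ = S₂ := by rw [h3, mul_one]
  have hS₁sym : ∀ x y : H₁, ⟪S₁ x, y⟫_ℂ = ⟪x, S₁ y⟫_ℂ := by
    intro x y
    rw [← hS₁sa, ContinuousLinearMap.adjoint_inner_left, hS₁sa]
  have hS₂sym : ∀ x y : H₂, ⟪S₂ x, y⟫_ℂ = ⟪x, S₂ y⟫_ℂ := by
    intro x y
    rw [← hS₂sa, ContinuousLinearMap.adjoint_inner_left, hS₂sa]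
  -- the inverse of 1 + L
  set e : WithLp 2 (H₁ × H₂) ≃L[ℂ] H₁ × H₂ := WithLp.prodContinuousLinearEquiv 2 ℂ H₁ H₂ with he
  set M₀ : H₁ × H₂ →L[ℂ] H₁ × H₂ :=
    ((S₁.comp (ContinuousLinearMap.fst ℂ H₁ H₂))
        + ((A.comp S₂).comp (ContinuousLinearMap.snd ℂ H₁ H₂))).prod
      (((-(G.comp S₁)).comp (ContinuousLinearMap.fst ℂ H₁ H₂))
        + (S₂.comp (ContinuousLinearMap.snd ℂ H₁ H₂))) with hM₀
  set N : WithLp 2 (H₁ × H₂) →L[ℂ] WithLp 2 (H₁ × H₂) :=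
    (e.symm : H₁ × H₂ →L[ℂ] WithLp 2 (H₁ × H₂)).comp
      (M₀.comp (e : WithLp 2 (H₁ × H₂) →L[ℂ] H₁ × H₂)) with hN
  have hNf : ∀ f : WithLp 2 (H₁ × H₂),
      WithLp.equiv 2 (H₁ × H₂) (N f) =
        (S₁ (WithLp.equiv 2 (H₁ × H₂) f).1 + A (S₂ (WithLp.equiv 2 (H₁ × H₂) f).2),
         -(G (S₁ (WithLp.equiv 2 (H₁ × H₂) f).1)) + S₂ (WithLp.equiv 2 (H₁ × H₂) f).2) := by
    intro f
    rfl
  have hinj := (WithLp.equiv 2 (H₁ × H₂)).injective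
  have h1 : ((1 : WithLp 2 (H₁ × H₂) →L[ℂ] WithLp 2 (H₁ × H₂)) + L) * N = 1 := by
    ext f
    apply hinj
    have hmul : (((1 : WithLp 2 (H₁ × H₂) →L[ℂ] WithLp 2 (H₁ × H₂)) + L) * N) f
        = N f + L (N f) := by
      simp [ContinuousLinearMap.mul_apply]
    rw [hmul, ContinuousLinearMap.one_apply, (show ∀ x y : WithLp 2 (H₁ × H₂), WithLp.equiv 2 (H₁ × H₂) (x + y) = WithLp.equiv 2 (H₁ × H₂) x + WithLp.equiv 2 (H₁ × H₂) y from fun _ _ => rfl), hL (N f), hNf f]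
    refine Prod.ext ?_ ?_
    · simp only [Prod.fst_add, Prod.snd_add, map_add, map_neg, neg_add_rev, neg_neg]
      conv_rhs => rw [← hDS₁ (WithLp.equiv 2 (H₁ × H₂) f).1]
      abel
    · simp only [Prod.fst_add, Prod.snd_add, map_add, map_neg, neg_add_rev, neg_neg]
      conv_rhs => rw [← hDS₂ (WithLp.equiv 2 (H₁ × H₂) f).2]
      abel
  have h2 : N * ((1 : WithLp 2 (H₁ × H₂) →L[ℂ] WithLp 2 (H₁ × H₂)) + L) = 1 := by
    ext f
    apply hinj
    have hmul : (N * ((1 : WithLp 2 (H₁ × H₂) →L[ℂ] WithLp 2 (H₁ × H₂)) + L)) f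
        = N (f + L f) := by
      simp [ContinuousLinearMap.mul_apply]
    rw [hmul, ContinuousLinearMap.one_apply, hNf (f + L f)]
    have hc1 : (WithLp.equiv 2 (H₁ × H₂) (f + L f)).1
        = (WithLp.equiv 2 (H₁ × H₂) f).1 + -(A ((WithLp.equiv 2 (H₁ × H₂) f).2)) := by
      rw [(show ∀ x y : WithLp 2 (H₁ × H₂), WithLp.equiv 2 (H₁ × H₂) (x + y) = WithLp.equiv 2 (H₁ × H₂) x + WithLp.equiv 2 (H₁ × H₂) y from fun _ _ => rfl), hL f]; rfl
    have hc2 : (WithLp.equiv 2 (H₁ × H₂) (f + L f)).2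
        = (WithLp.equiv 2 (H₁ × H₂) f).2 + G ((WithLp.equiv 2 (H₁ × H₂) f).1) := by
      rw [(show ∀ x y : WithLp 2 (H₁ × H₂), WithLp.equiv 2 (H₁ × H₂) (x + y) = WithLp.equiv 2 (H₁ × H₂) x + WithLp.equiv 2 (H₁ × H₂) y from fun _ _ => rfl), hL f]; rfl
    rw [hc1, hc2]
    refine Prod.ext ?_ ?_
    · simp only [map_add, map_neg, neg_add_rev, neg_neg]
      rw [hAS ((WithLp.equiv 2 (H₁ × H₂) f).2), ← hGS ((WithLp.equiv 2 (H₁ × H₂) f).1)]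
      conv_rhs => rw [← hDS₁ (WithLp.equiv 2 (H₁ × H₂) f).1]
      abel
    · simp only [map_add, map_neg, neg_add_rev, neg_neg]
      rw [← hAS ((WithLp.equiv 2 (H₁ × H₂) f).2), ← hGS ((WithLp.equiv 2 (H₁ × H₂) f).1)]
      conv_rhs => rw [← hDS₂ (WithLp.equiv 2 (H₁ × H₂) f).2]
      abel
  have hUnitL : IsUnit ((1 : WithLp 2 (H₁ × H₂) →L[ℂ] WithLp 2 (H₁ × H₂)) + L) :=
    ⟨⟨1 + L, N, h1, h2⟩, rfl⟩
  have hNinv : Ring.inverse ((1 : WithLp 2 (H₁ × H₂) →L[ℂ] WithLp 2 (H₁ × H₂)) + L) = N := by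
    have hc := Ring.inverse_mul_cancel _ hUnitL
    calc Ring.inverse (1 + L) = Ring.inverse (1 + L) * ((1 + L) * N) := by rw [h1, mul_one]
      _ = (Ring.inverse (1 + L) * (1 + L)) * N := by rw [mul_assoc]
      _ = N := by rw [hc, one_mul]
  have hKf : ∀ f : WithLp 2 (H₁ × H₂), WithLp.equiv 2 (H₁ × H₂) (K f) =
      (A (G (S₁ (WithLp.equiv 2 (H₁ × H₂) f).1)) - A (S₂ (WithLp.equiv 2 (H₁ × H₂) f).2),
       G (S₁ (WithLp.equiv 2 (H₁ × H₂) f).1) + G (A (S₂ (WithLp.equiv 2 (H₁ × H₂) f).2))) := by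
    intro f
    have hKL : K f = L (N f) := by rw [hK, ContinuousLinearMap.mul_apply, hNinv]
    rw [hKL, hL (N f), hNf f]
    refine Prod.ext ?_ ?_
    · simp only [map_add, map_neg, neg_add_rev, neg_neg]
      abel
    · simp only [map_add, map_neg, neg_add_rev, neg_neg]
  have hpart1 : (∀ f : WithLp 2 (H₁ × H₂),
      WithLp.equiv 2 (H₁ × H₂) (K f) =
        ((A.comp G * S₁) (WithLp.equiv 2 (H₁ × H₂) f).1 -
          (A.comp S₂) (WithLp.equiv 2 (H₁ × H₂) f).2,
         (G.comp S₁) (WithLp.equiv 2 (H₁ × H₂) f).1 +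
          (G.comp A * S₂) (WithLp.equiv 2 (H₁ × H₂) f).2)) := by
    intro f
    rw [hKf f]
    simp only [ContinuousLinearMap.mul_apply, ContinuousLinearMap.comp_apply]
  refine ⟨hpart1, ?_⟩
  -- inner product identities
  have hx1 : ∀ (u x : H₁), ⟪A (G (S₁ u)), x⟫_ℂ = ⟪u, A (G (S₁ x))⟫_ℂ := by
    intro u x
    calc ⟪A (G (S₁ u)), x⟫_ℂ = ⟪G (S₁ u), G x⟫_ℂ := by
          rw [hA]; exact ContinuousLinearMap.adjoint_inner_left G x (G (S₁ u))
      _ = ⟪S₁ u, A (G x)⟫_ℂ := by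
          rw [hA]; exact (ContinuousLinearMap.adjoint_inner_right G (S₁ u) (G x)).symm
      _ = ⟪u, S₁ (A (G x))⟫_ℂ := hS₁sym u (A (G x))
      _ = ⟪u, A (G (S₁ x))⟫_ℂ := by rw [← hAS, ← hGS]
  have hx2 : ∀ (v : H₂) (x : H₁), ⟪A (S₂ v), x⟫_ℂ = ⟪v, G (S₁ x)⟫_ℂ := by
    intro v x
    calc ⟪A (S₂ v), x⟫_ℂ = ⟪S₂ v, G x⟫_ℂ := by
          rw [hA]; exact ContinuousLinearMap.adjoint_inner_left G x (S₂ v)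
      _ = ⟪v, S₂ (G x)⟫_ℂ := hS₂sym v (G x)
      _ = ⟪v, G (S₁ x)⟫_ℂ := by rw [← hGS]
  have hx3 : ∀ (u : H₁) (y : H₂), ⟪G (S₁ u), y⟫_ℂ = ⟪u, A (S₂ y)⟫_ℂ := by
    intro u y
    calc ⟪G (S₁ u), y⟫_ℂ = ⟪S₁ u, A y⟫_ℂ := by
          rw [hA]; exact (ContinuousLinearMap.adjoint_inner_right G (S₁ u) y).symm
      _ = ⟪u, S₁ (A y)⟫_ℂ := hS₁sym u (A y)
      _ = ⟪u, A (S₂ y)⟫_ℂ := by rw [← hAS]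
  have hx4 : ∀ (v y : H₂), ⟪G (A (S₂ v)), y⟫_ℂ = ⟪v, G (A (S₂ y))⟫_ℂ := by
    intro v y
    calc ⟪G (A (S₂ v)), y⟫_ℂ = ⟪A (S₂ v), A y⟫_ℂ := by
          rw [hA]; exact (ContinuousLinearMap.adjoint_inner_right G (A (S₂ v)) y).symm
      _ = ⟪S₂ v, G (A y)⟫_ℂ := by
          rw [hA]; exact ContinuousLinearMap.adjoint_inner_left G (A y) (S₂ v)
      _ = ⟪v, S₂ (G (A y))⟫_ℂ := hS₂sym v (G (A y))
      _ = ⟪v, G (A (S₂ y))⟫_ℂ := by rw [← hGS, ← hAS]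
  -- component facts
  have hK1 : ∀ h : WithLp 2 (H₁ × H₂),
      (K h).fst = A (G (S₁ h.fst)) - A (S₂ h.snd) := by
    intro h
    have hc := congrArg Prod.fst (hKf h)
    simpa [WithLp.equiv_apply, WithLp.ofLp_fst, WithLp.ofLp_snd] using hc
  have hK2 : ∀ h : WithLp 2 (H₁ × H₂),
      (K h).snd = G (S₁ h.fst) + G (A (S₂ h.snd)) := by
    intro h
    have hc := congrArg Prod.snd (hKf h)
    simpa [WithLp.equiv_apply, WithLp.ofLp_fst, WithLp.ofLp_snd] using hc
  have hJ1 : ∀ h : WithLp 2 (H₁ × H₂), (P₁ h - P₂ h).fst = h.fst := by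
    intro h
    rw [WithLp.sub_fst]
    have hc1 := congrArg Prod.fst (hP₁ h)
    have hc2 := congrArg Prod.fst (hP₂ h)
    simp only [WithLp.equiv_apply, WithLp.ofLp_fst] at hc1 hc2
    rw [hc1, hc2, sub_zero]
  have hJ2 : ∀ h : WithLp 2 (H₁ × H₂), (P₁ h - P₂ h).snd = -h.snd := by
    intro h
    rw [WithLp.sub_snd]
    have hc1 := congrArg Prod.snd (hP₁ h)
    have hc2 := congrArg Prod.snd (hP₂ h)
    simp only [WithLp.equiv_apply, WithLp.ofLp_snd] at hc1 hc2
    rw [hc1, hc2, zero_sub]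
  ext f
  apply ext_inner_left ℂ
  intro g
  have hKJ : (ContinuousLinearMap.adjoint K * (P₁ - P₂)) f
      = ContinuousLinearMap.adjoint K (P₁ f - P₂ f) := by
    simp [ContinuousLinearMap.mul_apply]
  have hJK : ((P₁ - P₂) * K) f = P₁ (K f) - P₂ (K f) := by
    simp [ContinuousLinearMap.mul_apply]
  rw [hKJ, hJK, ContinuousLinearMap.adjoint_inner_right]
  rw [WithLp.prod_inner_apply, WithLp.prod_inner_apply]
  simp only [WithLp.ofLp_fst, WithLp.ofLp_snd]
  rw [hK1 g, hK2 g, hJ1 f, hJ2 f, hJ1 (K f), hJ2 (K f), hK1 f, hK2 f]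
  simp only [inner_sub_left, inner_add_left, inner_sub_right, inner_add_right,
    inner_neg_left, inner_neg_right]
  rw [hx1, hx2, hx3, hx4]
  ring
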